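/- arXiv:2101.12198 — 4 statements merged into one kernel-verified Lean document; each statement's English description precedes it below -/
import Mathlib

section
/- Let H, D, L be real symmetric N×N matrices with D positive diagonal, L positive semidefinite with L·𝟏 = 0, and H = -L + D. If H has exactly one positive eigenvalue, then D^{-1/2} H D^{-1/2} has exactly one eigenvalue equal to 1 (with eigenvector D^{1/2}𝟏) and all other eigenvalues are in (-∞, 0]. -/
open Matrix

variable {N : ℕ}

private lemma eig_dot (A : Matrix (Fin N) (Fin N) ℝ) (hA : A.IsHermitian) (k l : Fin N) :
    (hA.eigenvectorBasis k : Fin N → ℝ) ⬝ᵥ (hA.eigenvectorBasis l : Fin N → ℝ) =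
      if k = l then 1 else 0 := by
  have h := hA.eigenvectorBasis.orthonormal
  rw [orthonormal_iff_ite] at h
  rw [← h k l]
  simp [dotProduct, PiLp.inner_apply, RCLike.inner_apply, starRingEnd_apply, mul_comm]

private lemma eig_expand (A : Matrix (Fin N) (Fin N) ℝ) (hA : A.IsHermitian)
    (x : EuclideanSpace ℝ (Fin N)) :
    (x : Fin N → ℝ) = ∑ k, hA.eigenvectorBasis.toBasis.repr x k •
      (hA.eigenvectorBasis k : Fin N → ℝ) := by
  have h := hA.eigenvectorBasis.toBasis.sum_repr x
  simp only [OrthonormalBasis.coe_toBasis] at h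
  exact (congrArg WithLp.ofLp h.symm).trans (by simp [WithLp.ofLp_sum])

private lemma eig_li (A : Matrix (Fin N) (Fin N) ℝ) (hA : A.IsHermitian) :
    LinearIndependent ℝ (fun k => (hA.eigenvectorBasis k : Fin N → ℝ)) := by
  have h := hA.eigenvectorBasis.toBasis.linearIndependent
  simp only [OrthonormalBasis.coe_toBasis] at h
  exact h.map' (WithLp.linearEquiv 2 ℝ (Fin N → ℝ)).toLinearMap (LinearEquiv.ker _)

private lemma eig_mulVec (A : Matrix (Fin N) (Fin N) ℝ) (hA : A.IsHermitian)
    (x : EuclideanSpace ℝ (Fin N)) :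
    A *ᵥ x = ∑ k, (hA.eigenvectorBasis.toBasis.repr x k * hA.eigenvalues k) •
      (hA.eigenvectorBasis k : Fin N → ℝ) := by
  have h1 : A *ᵥ (x : Fin N → ℝ) =
      A *ᵥ (∑ k, hA.eigenvectorBasis.toBasis.repr x k • (hA.eigenvectorBasis k : Fin N → ℝ)) := by
    rw [← eig_expand A hA x]
  rw [h1]
  have h2 : A *ᵥ (∑ k, hA.eigenvectorBasis.toBasis.repr x k • (hA.eigenvectorBasis k : Fin N → ℝ))
      = ∑ k, A *ᵥ (hA.eigenvectorBasis.toBasis.repr x k • (hA.eigenvectorBasis k : Fin N → ℝ)) :=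
    map_sum (Matrix.mulVecLin A) _ Finset.univ
  rw [h2]
  refine Finset.sum_congr rfl fun k _ => ?_
  rw [Matrix.mulVec_smul,
    show A *ᵥ (hA.eigenvectorBasis k : Fin N → ℝ)
      = hA.eigenvalues k • (hA.eigenvectorBasis k : Fin N → ℝ) from hA.mulVec_eigenvectorBasis k,
    smul_smul]

private lemma key_dot' {N : ℕ} (f : Fin N → (Fin N → ℝ)) (a b : Fin N → ℝ)
    (hd : ∀ k l, f k ⬝ᵥ f l = if k = l then 1 else 0) :
    (∑ k, a k • f k) ⬝ᵥ (∑ l, b l • f l) = ∑ k, a k * b k := by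
  simp only [dotProduct, Finset.sum_apply, Pi.smul_apply, smul_eq_mul, Finset.sum_mul,
    Finset.mul_sum]
  have h1 : ∀ x : Fin N, ∑ y : Fin N, ∑ i : Fin N, a i * f i x * (b y * f y x)
      = ∑ i : Fin N, ∑ y : Fin N, a i * f i x * (b y * f y x) := fun x => Finset.sum_comm
  simp_rw [h1]
  rw [Finset.sum_comm]
  refine Finset.sum_congr rfl fun i _ => ?_
  rw [Finset.sum_comm]
  have h2 : ∀ y : Fin N, ∑ x : Fin N, a i * f i x * (b y * f y x)
      = (a i * b y) * (f i ⬝ᵥ f y) := by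
    intro y
    rw [dotProduct, Finset.mul_sum]
    exact Finset.sum_congr rfl fun x _ => by ring
  simp_rw [h2, hd]
  simp [Finset.sum_ite_eq']

private lemma key_dot (A : Matrix (Fin N) (Fin N) ℝ) (hA : A.IsHermitian) (a b : Fin N → ℝ) :
    (∑ k, a k • (hA.eigenvectorBasis k : Fin N → ℝ)) ⬝ᵥ
      (∑ l, b l • (hA.eigenvectorBasis l : Fin N → ℝ)) = ∑ k, a k * b k :=
  key_dot' _ a b (eig_dot A hA)

private lemma eig_quad (A : Matrix (Fin N) (Fin N) ℝ) (hA : A.IsHermitian)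
    (x : EuclideanSpace ℝ (Fin N)) :
    (x : Fin N → ℝ) ⬝ᵥ (A *ᵥ x) =
      ∑ k, hA.eigenvalues k * (hA.eigenvectorBasis.toBasis.repr x k)^2 := by
  calc (x : Fin N → ℝ) ⬝ᵥ (A *ᵥ x)
      = (∑ k, hA.eigenvectorBasis.toBasis.repr x k • (hA.eigenvectorBasis k : Fin N → ℝ)) ⬝ᵥ
        (∑ l, (hA.eigenvectorBasis.toBasis.repr x l * hA.eigenvalues l) •
          (hA.eigenvectorBasis l : Fin N → ℝ)) := by
        rw [← eig_expand A hA x, ← eig_mulVec A hA x]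
    _ = ∑ k, hA.eigenvectorBasis.toBasis.repr x k *
          (hA.eigenvectorBasis.toBasis.repr x k * hA.eigenvalues k) := key_dot A hA _ _
    _ = _ := by refine Finset.sum_congr rfl fun k _ => ?_; ring

open Module in
/-- If `H = -L + D` with `D` positive diagonal, `L` PSD with `L·𝟏 = 0`, and `H`
has exactly one positive eigenvalue, then `D^{-1/2} H D^{-1/2}` has exactly one eigenvalue
equal to `1`, with eigenvector `D^{1/2}𝟏`, and all other eigenvalues in `(-∞, 0]`. -/
theorem stmt4 (N : ℕ) (H D L : Matrix (Fin N) (Fin N) ℝ)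
    (hDdiag : D.IsDiag) (hDpos : ∀ i, 0 < D i i)
    (hL : L.PosSemidef) (hL1 : L.mulVec (fun _ => 1) = 0)
    (hH : H = -L + D)
    (hHherm : H.IsHermitian)
    (hone : ∃! i, 0 < hHherm.eigenvalues i) :
    (((Matrix.diagonal fun i => (Real.sqrt (D i i))⁻¹) * H *
        (Matrix.diagonal fun i => (Real.sqrt (D i i))⁻¹)).mulVec
        (fun i => Real.sqrt (D i i)) = fun i => Real.sqrt (D i i)) ∧
    ∀ (hM : ((Matrix.diagonal fun i => (Real.sqrt (D i i))⁻¹) * H *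
        (Matrix.diagonal fun i => (Real.sqrt (D i i))⁻¹)).IsHermitian),
      (∃! i, hM.eigenvalues i = 1) ∧
      (∀ i, hM.eigenvalues i = 1 ∨ hM.eigenvalues i ≤ 0) := by
  classical
  obtain ⟨i0, hi0, huni⟩ := hone
  have hsq : ∀ i, 0 < Real.sqrt (D i i) := fun i => Real.sqrt_pos.mpr (hDpos i)
  set Q : Matrix (Fin N) (Fin N) ℝ := Matrix.diagonal fun i => (Real.sqrt (D i i))⁻¹ with hQdef
  set v : Fin N → ℝ := fun i => Real.sqrt (D i i) with hvdef
  have hQv : Q *ᵥ v = fun _ => (1:ℝ) := by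
    funext i
    simp only [hQdef, Matrix.mulVec_diagonal, hvdef]
    exact inv_mul_cancel₀ (hsq i).ne'
  have hH1 : H *ᵥ (fun _ => (1:ℝ)) = fun i => D i i := by
    rw [hH, Matrix.add_mulVec, Matrix.neg_mulVec, hL1, ← hDdiag.diagonal_diag]
    funext i
    simp [Matrix.mulVec_diagonal, Matrix.diag]
  have part1 : (Q * H * Q) *ᵥ v = v := by
    rw [← Matrix.mulVec_mulVec, ← Matrix.mulVec_mulVec, hQv, hH1]
    funext i
    simp only [hQdef, Matrix.mulVec_diagonal, hvdef]
    rw [inv_mul_eq_div, div_eq_iff (hsq i).ne']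
    exact (Real.mul_self_sqrt (hDpos i).le).symm
  refine ⟨part1, ?_⟩
  intro hM
  -- v is nonzero
  have hvne : v ≠ 0 := by
    intro h
    have := congrFun h i0
    exact (hsq i0).ne' this
  -- Step A: some eigenvalue of M equals 1
  have stepA : ∃ k, hM.eigenvalues k = 1 := by
    have e1 := eig_mulVec _ hM (WithLp.toLp 2 v)
    have e2 := eig_expand _ hM (WithLp.toLp 2 v)
    simp only [WithLp.ofLp_toLp] at e1 e2
    rw [part1] at e1
    have hsum : ∑ k, ((hM.eigenvectorBasis.toBasis.repr (WithLp.toLp 2 v) k *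
          hM.eigenvalues k) - hM.eigenvectorBasis.toBasis.repr (WithLp.toLp 2 v) k) •
          (hM.eigenvectorBasis k : Fin N → ℝ) = 0 := by
      calc _ = (∑ k, (hM.eigenvectorBasis.toBasis.repr (WithLp.toLp 2 v) k *
              hM.eigenvalues k) • (hM.eigenvectorBasis k : Fin N → ℝ)) -
            (∑ k, hM.eigenvectorBasis.toBasis.repr (WithLp.toLp 2 v) k •
              (hM.eigenvectorBasis k : Fin N → ℝ)) := by
            rw [← Finset.sum_sub_distrib]
            exact Finset.sum_congr rfl fun k _ => (sub_smul _ _ _)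
        _ = v - v := by rw [← e1, ← e2]
        _ = 0 := sub_self _
    have hall := Fintype.linearIndependent_iff.mp (eig_li _ hM) _ hsum
    have hex : ∃ k, hM.eigenvectorBasis.toBasis.repr (WithLp.toLp 2 v) k ≠ 0 := by
      by_contra h
      push_neg at h
      exact hvne (Eq.trans e2 (by simp [h]))
    obtain ⟨k, hk⟩ := hex
    refine ⟨k, ?_⟩
    have h0 : hM.eigenvectorBasis.toBasis.repr (WithLp.toLp 2 v) k *
        (hM.eigenvalues k - 1) = 0 := by linear_combination hall k
    rcases mul_eq_zero.mp h0 with h | h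
    · exact absurd h hk
    · linarith
  -- Step B
  have stepB : ∀ p q : Fin N, p ≠ q → 0 < hM.eigenvalues p → 0 < hM.eigenvalues q → False := by
    intro p q hpq hp hq
    set sW : Set (Fin N) := {k | ¬ 0 < hHherm.eigenvalues k} with hsW
    set sU : Set (Fin N) := {k | 0 < hM.eigenvalues k} with hsU
    set W : Submodule ℝ (EuclideanSpace ℝ (Fin N)) :=
      Submodule.span ℝ (⇑hHherm.eigenvectorBasis.toBasis '' sW) with hWdef
    set U : Submodule ℝ (EuclideanSpace ℝ (Fin N)) :=
      Submodule.span ℝ (⇑hM.eigenvectorBasis.toBasis '' sU) with hUdef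
    have hWr : Module.finrank ℝ W = Fintype.card sW := by
      rw [hWdef, Set.image_eq_range]
      exact finrank_span_eq_card ((hHherm.eigenvectorBasis.toBasis.linearIndependent).comp
        Subtype.val Subtype.val_injective)
    have hUr : Module.finrank ℝ U = Fintype.card sU := by
      rw [hUdef, Set.image_eq_range]
      exact finrank_span_eq_card ((hM.eigenvectorBasis.toBasis.linearIndependent).comp
        Subtype.val Subtype.val_injective)
    have hc1 : Fintype.card {k // 0 < hHherm.eigenvalues k} = 1 :=
      Fintype.card_eq_one_iff.mpr ⟨⟨i0, hi0⟩, fun y => Subtype.ext (huni y y.2)⟩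
    have hcW : Fintype.card sW = N - 1 := by
      have h := Fintype.card_subtype_compl (fun k => 0 < hHherm.eigenvalues k)
      rw [hc1, Fintype.card_fin] at h
      exact (Fintype.card_congr (Equiv.subtypeEquivRight fun x => Iff.rfl)).trans h
    have hcU : 1 < Fintype.card sU :=
      Fintype.one_lt_card_iff.mpr ⟨⟨p, hp⟩, ⟨q, hq⟩, fun h => hpq (congrArg Subtype.val h)⟩
    have hWquad : ∀ z : EuclideanSpace ℝ (Fin N), z ∈ W → (z : Fin N → ℝ) ⬝ᵥ (H *ᵥ z) ≤ 0 := by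
      intro z hz
      rw [eig_quad H hHherm z]
      apply Finset.sum_nonpos
      intro k _
      by_cases hck : hHherm.eigenvectorBasis.toBasis.repr z k = 0
      · simp [hck]
      · have hk : k ∈ sW := ((Basis.mem_span_image _).mp hz)
          (Finset.mem_coe.mpr (Finsupp.mem_support_iff.mpr hck))
        have hle : hHherm.eigenvalues k ≤ 0 := not_lt.mp hk
        nlinarith [sq_nonneg (hHherm.eigenvectorBasis.toBasis.repr z k)]
    have hUquad : ∀ z : EuclideanSpace ℝ (Fin N), z ∈ U → z ≠ 0 →
        0 < (z : Fin N → ℝ) ⬝ᵥ ((Q * H * Q) *ᵥ z) := by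
      intro z hz hz0
      rw [eig_quad _ hM z]
      have hsupp := (Basis.mem_span_image _).mp hz
      have hex : ∃ k, hM.eigenvectorBasis.toBasis.repr z k ≠ 0 := by
        by_contra h
        push_neg at h
        exact hz0 (WithLp.ofLp_injective 2 (Eq.trans (eig_expand _ hM z) (by simp [h])))
      obtain ⟨k0, hk0⟩ := hex
      apply Finset.sum_pos'
      · intro k _
        by_cases hck : hM.eigenvectorBasis.toBasis.repr z k = 0
        · simp [hck]
        · have hk : k ∈ sU := hsupp (Finset.mem_coe.mpr (Finsupp.mem_support_iff.mpr hck))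
          have hpos : 0 < hM.eigenvalues k := hk
          nlinarith [sq_nonneg (hM.eigenvectorBasis.toBasis.repr z k)]
      · refine ⟨k0, Finset.mem_univ _, ?_⟩
        have hk : k0 ∈ sU := hsupp (Finset.mem_coe.mpr (Finsupp.mem_support_iff.mpr hk0))
        have hpos : 0 < hM.eigenvalues k0 := hk
        have h2 : 0 < (hM.eigenvectorBasis.toBasis.repr z k0)^2 := by positivity
        exact mul_pos hpos h2
    have hQT : Qᵀ = Q := Matrix.diagonal_transpose _
    have hcong : ∀ x : Fin N → ℝ, x ⬝ᵥ ((Q * H * Q) *ᵥ x) = (Q *ᵥ x) ⬝ᵥ (H *ᵥ (Q *ᵥ x)) := by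
      intro x
      have hvm : x ᵥ* Q = Q *ᵥ x := by
        conv_lhs => rw [← hQT]
        exact Matrix.vecMul_transpose Q x
      rw [← Matrix.mulVec_mulVec, ← Matrix.mulVec_mulVec, Matrix.dotProduct_mulVec, hvm]
    have hQQ : Q * Matrix.diagonal v = 1 := by
      rw [hQdef, hvdef, Matrix.diagonal_mul_diagonal,
        show (fun i => (Real.sqrt (D i i))⁻¹ * Real.sqrt (D i i)) = fun _ => (1:ℝ) from
          funext fun i => inv_mul_cancel₀ (hsq i).ne', Matrix.diagonal_one]
    have hQQ' : Matrix.diagonal v * Q = 1 := by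
      rw [hQdef, hvdef, Matrix.diagonal_mul_diagonal,
        show (fun i => Real.sqrt (D i i) * (Real.sqrt (D i i))⁻¹) = fun _ => (1:ℝ) from
          funext fun i => mul_inv_cancel₀ (hsq i).ne', Matrix.diagonal_one]
    set QL : EuclideanSpace ℝ (Fin N) ≃ₗ[ℝ] EuclideanSpace ℝ (Fin N) :=
      LinearEquiv.ofLinear (Matrix.toEuclideanLin Q) (Matrix.toEuclideanLin (Matrix.diagonal v))
        (LinearMap.ext fun z => show WithLp.toLp 2 (Q *ᵥ ((Matrix.diagonal v) *ᵥ z.ofLp)) = z by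
          rw [Matrix.mulVec_mulVec, hQQ, Matrix.one_mulVec, WithLp.toLp_ofLp])
        (LinearMap.ext fun z => show WithLp.toLp 2 ((Matrix.diagonal v) *ᵥ (Q *ᵥ z.ofLp)) = z by
          rw [Matrix.mulVec_mulVec, hQQ', Matrix.one_mulVec, WithLp.toLp_ofLp]) with hQL
    set U' : Submodule ℝ (EuclideanSpace ℝ (Fin N)) := U.map (QL : _ →ₗ[ℝ] _) with hU'def
    have hU'r : Module.finrank ℝ U' = Module.finrank ℝ U := LinearEquiv.finrank_map_eq QL U
    have hsup := Submodule.finrank_sup_add_finrank_inf_eq U' W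
    have hle : Module.finrank ℝ ↥(U' ⊔ W) ≤ N := by
      have h := Submodule.finrank_le (U' ⊔ W)
      rwa [finrank_euclideanSpace, Fintype.card_fin] at h
    have hNpos : 0 < N := i0.pos
    have hprod : 0 < Module.finrank ℝ ↥(U' ⊓ W) := by omega
    have hnebot : U' ⊓ W ≠ ⊥ := by
      intro hbot
      rw [hbot, finrank_bot] at hprod
      exact lt_irrefl 0 hprod
    obtain ⟨z, hzmem, hz0⟩ := Submodule.exists_mem_ne_zero_of_ne_bot hnebot
    obtain ⟨u, huU, huz⟩ := Submodule.mem_map.mp hzmem.1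
    have hu0 : u ≠ 0 := by
      intro h
      rw [h, map_zero] at huz
      exact hz0 huz.symm
    have hzu : (z : Fin N → ℝ) = Q *ᵥ u := by rw [← huz]; rfl
    have h1 : 0 < (u : Fin N → ℝ) ⬝ᵥ ((Q * H * Q) *ᵥ u) := hUquad u huU hu0
    rw [hcong u] at h1
    have h2 := hWquad z hzmem.2
    rw [hzu] at h2
    linarith
  obtain ⟨k1, hk1⟩ := stepA
  have hk1pos : 0 < hM.eigenvalues k1 := by rw [hk1]; norm_num
  constructor
  · refine ⟨k1, hk1, fun j hj => ?_⟩
    by_contra hne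
    exact stepB j k1 hne (by rw [hj]; norm_num) hk1pos
  · intro k
    by_cases hk : k = k1
    · left; rw [hk, hk1]
    · right
      by_contra hlt
      push_neg at hlt
      exact stepB k k1 hk hlt hk1pos
end

section
/- Let H, D, L be as follows: D positive diagonal, L symmetric positive semidefinite with L·𝟏 = 0 and ker(L) one-dimensional, and suppose D^{-1/2}(-L+D)D^{-1/2} has exactly one positive eigenvalue. Then -D^{-1}L has exactly one eigenvalue equal to 0, and all its other eigenvalues lie in (-∞, -1]. -/
lemma eig_exists {n : Type*} [Fintype n] [DecidableEq n] {A : Matrix n n ℝ} (hA : A.IsHermitian)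
    {μ : ℝ} {v : n → ℝ} (hv : v ≠ 0) (h : A.mulVec v = μ • v) : ∃ i, hA.eigenvalues i = μ := by
  have hmem : μ ∈ spectrum ℝ A := by
    rw [← AlgEquiv.spectrum_eq (Matrix.toLinAlgEquiv' (n := n) (R := ℝ)),
      ← Module.End.hasEigenvalue_iff_mem_spectrum]
    apply Module.End.hasEigenvalue_of_hasEigenvector (x := v)
    refine ⟨?_, hv⟩
    rw [Module.End.mem_eigenspace_iff, Matrix.toLinAlgEquiv'_apply]
    exact h
  rw [hA.spectrum_real_eq_range_eigenvalues] at hmem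
  exact hmem

/-- With `D` positive diagonal, `L` PSD with `L·𝟏 = 0` and one-dimensional
kernel, and `D^{-1/2}(-L+D)D^{-1/2}` having exactly one positive eigenvalue, the matrix
`-D⁻¹L` has exactly one eigenvalue equal to `0` (right eigenvector `𝟏`, left eigenvector
`D𝟏`), and all its other eigenvalues lie in `(-∞, -1]`. -/
theorem stmt5 (N : ℕ) (D L : Matrix (Fin N) (Fin N) ℝ)
    (hDdiag : D.IsDiag) (hDpos : ∀ i, 0 < D i i)
    (hL : L.PosSemidef) (hL1 : L.mulVec (fun _ => 1) = 0)
    (hker : ∀ w : Fin N → ℝ, L.mulVec w = 0 → ∃ c : ℝ, w = fun _ => c)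
    (hone : ∀ (hM : ((Matrix.diagonal fun i => (Real.sqrt (D i i))⁻¹) * (-L + D) *
        (Matrix.diagonal fun i => (Real.sqrt (D i i))⁻¹)).IsHermitian),
      ∃! i, 0 < hM.eigenvalues i) :
    ((-(D⁻¹ * L)).mulVec (fun _ => 1) = 0) ∧
    (∀ w : Fin N → ℝ, (-(D⁻¹ * L)).mulVec w = 0 → ∃ c : ℝ, w = fun _ => c) ∧
    (Matrix.vecMul (fun i => D i i) (-(D⁻¹ * L)) = 0) ∧
    (∀ (μ : ℝ) (w : Fin N → ℝ), w ≠ 0 → (-(D⁻¹ * L)).mulVec w = μ • w →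
      μ = 0 ∨ μ ≤ -1) := by
  have hDeq : Matrix.diagonal (fun i => D i i) = D := hDdiag.diagonal_diag
  have hdet : IsUnit D.det := by
    rw [← hDeq, Matrix.det_diagonal]
    exact (Finset.prod_pos (fun i _ => hDpos i)).ne'.isUnit
  have hDinv : D⁻¹ = Matrix.diagonal (fun i => (D i i)⁻¹) := by
    apply Matrix.inv_eq_right_inv
    nth_rewrite 1 [← hDeq]
    rw [Matrix.diagonal_mul_diagonal]
    have : (fun i => D i i * (D i i)⁻¹) = fun _ => (1:ℝ) :=
      funext fun i => mul_inv_cancel₀ (hDpos i).ne'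
    rw [this, Matrix.diagonal_one]
  have hDDinv : D * D⁻¹ = 1 := Matrix.mul_nonsing_inv _ hdet
  -- part 1
  have h1 : (-(D⁻¹ * L)).mulVec (fun _ => 1) = 0 := by
    rw [Matrix.neg_mulVec, ← Matrix.mulVec_mulVec, hL1]
    simp
  refine ⟨h1, ?_, ?_, ?_⟩
  · -- part 2
    intro w hw
    apply hker
    have : L.mulVec w = (D * (D⁻¹ * L)).mulVec w := by
      rw [← Matrix.mul_assoc, Matrix.mul_assoc D, ← Matrix.mul_assoc,
        hDDinv, Matrix.one_mul]
    rw [this, ← Matrix.mulVec_mulVec]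
    rw [Matrix.neg_mulVec, neg_eq_zero] at hw
    rw [hw]
    simp
  · -- part 3
    have hLsymm : L.transpose = L := by
      rw [← Matrix.conjTranspose_eq_transpose_of_trivial]
      exact hL.1
    rw [Matrix.vecMul_neg, ← Matrix.vecMul_vecMul]
    have hv : Matrix.vecMul (fun i => D i i) D⁻¹ = (fun _ => 1) := by
      funext j
      rw [hDinv, Matrix.vecMul_diagonal]
      exact mul_inv_cancel₀ (hDpos j).ne'
    rw [hv, ← Matrix.mulVec_transpose, hLsymm, hL1, neg_zero]
  · -- part 4
    intro μ w hw hmu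
    set s : Fin N → ℝ := fun i => Real.sqrt (D i i) with hs
    have hspos : ∀ i, 0 < s i := fun i => Real.sqrt_pos.2 (hDpos i)
    have hssq : ∀ i, s i * s i = D i i := fun i => Real.mul_self_sqrt (hDpos i).le
    set S : Matrix (Fin N) (Fin N) ℝ := Matrix.diagonal (fun i => (s i)⁻¹) with hS
    set M : Matrix (Fin N) (Fin N) ℝ := S * (-L + D) * S with hMdef
    have hSh : S.conjTranspose = S := by
      rw [hS, Matrix.diagonal_conjTranspose]
      simp
    have hM : M.IsHermitian := by
      have : ((-L + D)).IsHermitian := by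
        have hDH : D.IsHermitian := by
          rw [← hDeq]; exact Matrix.isHermitian_diagonal_iff.2 (fun i => IsSelfAdjoint.all _)
        exact (hL.1.neg).add hDH
      have := Matrix.isHermitian_mul_mul_conjTranspose S this
      rwa [hSh] at this
    -- L w = -μ • (D w)
    have hLw : L.mulVec w = (-μ) • D.mulVec w := by
      have : (D⁻¹ * L).mulVec w = (-μ) • w := by
        rw [Matrix.neg_mulVec] at hmu
        rw [neg_smul, ← hmu, neg_neg]
      have h2 : (D * (D⁻¹ * L)).mulVec w = D.mulVec ((-μ) • w) := by
        rw [← Matrix.mulVec_mulVec, this]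
      rw [← Matrix.mul_assoc, Matrix.mul_assoc D, ← Matrix.mul_assoc, hDDinv,
        Matrix.one_mul] at h2
      rw [h2, Matrix.mulVec_smul]
    -- eigenvector u (eigenvalue 1)
    have hu : M.mulVec s = (1 : ℝ) • s := by
      rw [hMdef, ← Matrix.mulVec_mulVec, ← Matrix.mulVec_mulVec]
      have hSs : S.mulVec s = (fun _ => 1) := by
        funext i
        rw [hS, Matrix.mulVec_diagonal]
        exact inv_mul_cancel₀ (hspos i).ne'
      rw [hSs, Matrix.add_mulVec, Matrix.neg_mulVec, hL1, neg_zero, zero_add]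
      funext i
      rw [hS, Matrix.mulVec_diagonal, ← hDeq, Matrix.mulVec_diagonal]
      simp only [mul_one, one_smul, ← hssq i]
      field_simp
    -- eigenvector v (eigenvalue μ+1)
    set v : Fin N → ℝ := fun i => s i * w i with hv
    have hvne : v ≠ 0 := by
      intro h0
      apply hw
      funext i
      have := congrFun h0 i
      simp only [hv, Pi.zero_apply] at this
      have := mul_eq_zero.1 this
      rcases this with h | h
      · exact absurd h (hspos i).ne'
      · exact h
    have hMv : M.mulVec v = (μ + 1) • v := by
      rw [hMdef, ← Matrix.mulVec_mulVec, ← Matrix.mulVec_mulVec]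
      have hSv : S.mulVec v = w := by
        funext i
        rw [hS, Matrix.mulVec_diagonal, hv]
        rw [← mul_assoc, inv_mul_cancel₀ (hspos i).ne', one_mul]
      rw [hSv, Matrix.add_mulVec, Matrix.neg_mulVec, hLw]
      have : -((-μ) • D.mulVec w) + D.mulVec w = (μ + 1) • D.mulVec w := by
        module
      rw [this, Matrix.mulVec_smul]
      congr 1
      funext i
      rw [hS, Matrix.mulVec_diagonal, ← hDeq, Matrix.mulVec_diagonal, hv, ← hssq i,
        ← mul_assoc, ← mul_assoc, inv_mul_cancel₀ (hspos i).ne', one_mul]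
    -- conclude
    by_cases hmu0 : μ = 0
    · exact Or.inl hmu0
    right
    by_contra hcon
    push_neg at hcon
    have hμ1 : 0 < μ + 1 := by linarith
    have hNpos : 0 < N := by
      rcases Nat.eq_zero_or_pos N with h | h
      · subst h
        exact absurd (funext fun i => i.elim0) hw
      · exact h
    have hsne : s ≠ 0 := fun h0 =>
      (hspos ⟨0, hNpos⟩).ne' (by simpa using congrFun h0 ⟨0, hNpos⟩)
    obtain ⟨i1, hi1⟩ := eig_exists hM hsne hu
    obtain ⟨i2, hi2⟩ := eig_exists hM hvne hMv
    obtain ⟨j, hj, huniq⟩ := hone hM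
    have e1 : i1 = j := huniq i1 (show 0 < hM.eigenvalues i1 by rw [hi1]; norm_num)
    have e2 : i2 = j := huniq i2 (show 0 < hM.eigenvalues i2 by rw [hi2]; exact hμ1)
    rw [e1] at hi1
    rw [e2] at hi2
    have h11 := hi1.symm.trans hi2
    exact hmu0 (by linarith)
end

section
/- Let a_1, ..., a_{d-1} ∈ ℤ^d and b_1, ..., b_{d-1} nonzero integers with |b_i| ≤ B for all i, such that the points a_i/b_i are affinely independent. Then the (d-2)-dimensional volume of the simplex conv(a_1/b_1, ..., a_{d-1}/b_{d-1}) is at least 1/(d! · B^{2d}). -/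
open Matrix


/-- volume lower bound for a rational simplex.  Here `d = n + 2`: the `d - 1`
points `x i = a i / b i ∈ ℝ^d` (with `a i ∈ ℤ^d`, `b i` nonzero integers, `|b i| ≤ B`) are
affinely independent, and the `(d-2)`-dimensional volume of their convex hull, computed by
the Gram determinant formula `(1/(d-2)!)·√(det MᵀM)` with `M` the matrix whose columns are
`x i - x last`, is at least `1/(d!·B^{2d})`. -/
theorem stmt6 (n : ℕ) (B : ℤ)
    (a : Fin (n + 1) → Fin (n + 2) → ℤ) (b : Fin (n + 1) → ℤ)
    (hb : ∀ i, b i ≠ 0) (hB : ∀ i, |b i| ≤ B)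
    (x : Fin (n + 1) → Fin (n + 2) → ℝ)
    (hx : ∀ i k, x i k = (a i k : ℝ) / (b i : ℝ))
    (hind : AffineIndependent ℝ x) :
    (1 : ℝ) / (Nat.factorial (n + 2) * (B : ℝ) ^ (2 * (n + 2))) ≤
      (1 / Nat.factorial n) *
        Real.sqrt
          (Matrix.transpose (Matrix.of fun (k : Fin (n + 2)) (i : Fin n) =>
              x i.castSucc k - x (Fin.last n) k) *
            (Matrix.of fun (k : Fin (n + 2)) (i : Fin n) =>
              x i.castSucc k - x (Fin.last n) k)).det := by
  classical
  set M : Matrix (Fin (n + 2)) (Fin n) ℝ :=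
    Matrix.of fun (k : Fin (n + 2)) (i : Fin n) =>
      x i.castSucc k - x (Fin.last n) k with hM
  -- basic facts about B
  have hB1 : (1 : ℤ) ≤ B := le_trans (Int.one_le_abs (hb (Fin.last n))) (hB (Fin.last n))
  have hBR : (1 : ℝ) ≤ (B : ℝ) := by exact_mod_cast hB1
  have hBpos : (0 : ℝ) < (B : ℝ) := lt_of_lt_of_le one_pos hBR
  have hbR : ∀ i, ((b i : ℝ)) ≠ 0 := fun i => Int.cast_ne_zero.mpr (hb i)
  -- linear independence of the columns of M
  have hli : LinearIndependent ℝ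
      (fun i : Fin n => fun k : Fin (n + 2) => x i.castSucc k - x (Fin.last n) k) := by
    have h1 := (affineIndependent_iff_linearIndependent_vsub ℝ x (Fin.last n)).mp hind
    set e : Fin n → {j : Fin (n + 1) // j ≠ Fin.last n} :=
      fun i => ⟨i.castSucc, (Fin.castSucc_lt_last i).ne⟩ with he_def
    have he : Function.Injective e := fun i j hij =>
      Fin.castSucc_inj.mp (Subtype.ext_iff.mp hij)
    have h2 : (fun i : Fin n => fun k : Fin (n + 2) => x i.castSucc k - x (Fin.last n) k)
        = fun i : Fin n => x (e i : Fin (n + 1)) -ᵥ x (Fin.last n) := by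
      funext i k
      simp [he_def, vsub_eq_sub]
    rw [h2]
    exact h1.comp e he
  -- M has trivial kernel
  have hker : ∀ v : Fin n → ℝ, M.mulVec v = 0 → v = 0 := by
    intro v hv
    have hsum : ∑ i : Fin n, v i •
        (fun k : Fin (n + 2) => x i.castSucc k - x (Fin.last n) k) = 0 := by
      funext k
      have := congrFun hv k
      simpa [Matrix.mulVec, dotProduct, hM, mul_comm, Finset.sum_apply] using this
    funext i
    exact (Fintype.linearIndependent_iff.mp hli v hsum) i
  -- MᵀM is positive definite
  have hPS : (Mᵀ * M).PosSemidef := by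
    have := Matrix.posSemidef_conjTranspose_mul_self M
    rwa [Matrix.conjTranspose_eq_transpose_of_trivial] at this
  have hPD : (Mᵀ * M).PosDef := by
    refine ⟨hPS.1, fun v hv => lt_of_le_of_ne (hPS.2 v) fun heq => hv ?_⟩
    have h0 : M.mulVec v ⬝ᵥ M.mulVec v = 0 := by
      have : star v ⬝ᵥ (Mᵀ * M).mulVec v = M.mulVec v ⬝ᵥ M.mulVec v := by
        rw [← Matrix.mulVec_mulVec, Matrix.dotProduct_mulVec, Matrix.vecMul_transpose]
        simp [star_trivial]
      rw [← this, heq]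
      simp [dotProduct, mulVec, Finsupp.sum_fintype, Finset.mul_sum, mul_assoc]
    exact Finsupp.coe_eq_zero.mp (hker v ((dotProduct_self_eq_zero).mp h0))
  have hdetpos : 0 < (Mᵀ * M).det := hPD.det_pos
  -- the integer matrix N and scaling factors c
  set N : Matrix (Fin (n + 2)) (Fin n) ℤ :=
    Matrix.of fun (k : Fin (n + 2)) (i : Fin n) =>
      b (Fin.last n) * a i.castSucc k - b i.castSucc * a (Fin.last n) k with hN
  set c : Fin n → ℝ := fun i => ((b i.castSucc : ℝ) * (b (Fin.last n) : ℝ))⁻¹ with hc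
  have hcne : ∀ i, c i ≠ 0 := fun i =>
    inv_ne_zero (mul_ne_zero (hbR _) (hbR _))
  have hMN : M = N.map (Int.cast : ℤ → ℝ) * Matrix.diagonal c := by
    ext k i
    rw [Matrix.mul_diagonal]
    simp only [hM, hN, hc, Matrix.map_apply, Matrix.of_apply, hx]
    push_cast
    field_simp [hbR i.castSucc, hbR (Fin.last n)]
  -- determinant factorization
  have hfac : (Mᵀ * M).det = (∏ i, c i) ^ 2 * (((Nᵀ * N).det : ℤ) : ℝ) := by
    set P : Matrix (Fin (n + 2)) (Fin n) ℝ := N.map (Int.cast : ℤ → ℝ) with hP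
    have hmap : (Nᵀ * N).map (Int.cast : ℤ → ℝ) = Pᵀ * P := by
      have h := Matrix.map_mul (L := Nᵀ) (M := N) (f := (Int.castRingHom ℝ : ℤ →+* ℝ))
      simpa [hP, Matrix.transpose_map] using h
    have hdetmap : (((Nᵀ * N).det : ℤ) : ℝ) = (Pᵀ * P).det := by
      rw [← hmap]
      have := RingHom.map_det (Int.castRingHom ℝ) (Nᵀ * N)
      simpa using this.symm ▸ this
    have heq : Mᵀ * M = Matrix.diagonal c * (Pᵀ * P) * Matrix.diagonal c := by
      rw [hMN]
      simp only [Matrix.transpose_mul, Matrix.diagonal_transpose, Matrix.mul_assoc, hP]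
    rw [heq, Matrix.det_mul, Matrix.det_mul, Matrix.det_diagonal, hdetmap]
    ring
  -- the integer determinant is at least 1
  have hprodsq : 0 < (∏ i, c i) ^ 2 := by
    have h := Finset.prod_ne_zero_iff.mpr fun i (_ : i ∈ Finset.univ) => hcne i
    exact pow_two_pos_of_ne_zero h
  have hgpos : (0 : ℝ) < (((Nᵀ * N).det : ℤ) : ℝ) := by
    by_contra h
    push_neg at h
    have : (Mᵀ * M).det ≤ 0 := by
      rw [hfac]
      exact mul_nonpos_of_nonneg_of_nonpos (le_of_lt hprodsq) h
    linarith
  have hg1 : (1 : ℝ) ≤ (((Nᵀ * N).det : ℤ) : ℝ) := by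
    have : (0 : ℤ) < (Nᵀ * N).det := by exact_mod_cast hgpos
    exact_mod_cast this
  -- lower bound on det
  have hdetge : (∏ i, c i) ^ 2 ≤ (Mᵀ * M).det := by
    calc (∏ i, c i) ^ 2 = (∏ i, c i) ^ 2 * 1 := by ring
    _ ≤ (∏ i, c i) ^ 2 * (((Nᵀ * N).det : ℤ) : ℝ) := by
        exact mul_le_mul_of_nonneg_left hg1 (le_of_lt hprodsq)
    _ = (Mᵀ * M).det := hfac.symm
  -- bound |∏ c| from below
  have hBc : ∀ i, ((B : ℝ) ^ 2)⁻¹ ≤ |c i| := by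
    intro i
    rw [hc, abs_inv, abs_mul]
    have h1 : (0 : ℝ) < (B : ℝ) ^ 2 := by positivity
    have h2 : |(b i.castSucc : ℝ)| * |(b (Fin.last n) : ℝ)| ≤ (B : ℝ) ^ 2 := by
      have ha : |(b i.castSucc : ℝ)| ≤ (B : ℝ) := by
        rw [← Int.cast_abs]; exact_mod_cast hB i.castSucc
      have hb' : |(b (Fin.last n) : ℝ)| ≤ (B : ℝ) := by
        rw [← Int.cast_abs]; exact_mod_cast hB (Fin.last n)
      calc |(b i.castSucc : ℝ)| * |(b (Fin.last n) : ℝ)| ≤ (B : ℝ) * (B : ℝ) :=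
            mul_le_mul ha hb' (abs_nonneg _) (le_of_lt hBpos)
        _ = (B : ℝ) ^ 2 := by ring
    have h3 : (0 : ℝ) < |(b i.castSucc : ℝ)| * |(b (Fin.last n) : ℝ)| :=
      mul_pos (abs_pos.mpr (hbR i.castSucc)) (abs_pos.mpr (hbR (Fin.last n)))
    exact inv_anti₀ h3 h2
  have hprodge : ((B : ℝ) ^ (2 * n))⁻¹ ≤ |∏ i, c i| := by
    rw [Finset.abs_prod]
    calc ((B : ℝ) ^ (2 * n))⁻¹ = ∏ _i : Fin n, ((B : ℝ) ^ 2)⁻¹ := by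
          simp [Finset.prod_const, inv_pow, ← pow_mul]
    _ ≤ ∏ i, |c i| := by
          apply Finset.prod_le_prod
          · intro i _; positivity
          · intro i _; exact hBc i
  -- bound on sqrt
  have hsqrt : ((B : ℝ) ^ (2 * n))⁻¹ ≤ Real.sqrt (Mᵀ * M).det := by
    calc ((B : ℝ) ^ (2 * n))⁻¹ ≤ |∏ i, c i| := hprodge
    _ = Real.sqrt ((∏ i, c i) ^ 2) := (Real.sqrt_sq_eq_abs _).symm
    _ ≤ Real.sqrt (Mᵀ * M).det := Real.sqrt_le_sqrt hdetge
  -- finish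
  have hfac0 : (0 : ℝ) < (Nat.factorial n : ℝ) := by
    exact_mod_cast Nat.factorial_pos n
  have hfac2 : (0 : ℝ) < (Nat.factorial (n + 2) : ℝ) := by
    exact_mod_cast Nat.factorial_pos (n + 2)
  calc (1 : ℝ) / (Nat.factorial (n + 2) * (B : ℝ) ^ (2 * (n + 2)))
      ≤ 1 / (Nat.factorial n * (B : ℝ) ^ (2 * n)) := by
        apply one_div_le_one_div_of_le
        · positivity
        · apply mul_le_mul
          · exact_mod_cast Nat.factorial_le (by omega)
          · exact pow_le_pow_right₀ hBR (by omega)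
          · positivity
          · positivity
    _ = (1 / Nat.factorial n) * ((B : ℝ) ^ (2 * n))⁻¹ := by
        rw [one_div, one_div, mul_inv]
    _ ≤ (1 / Nat.factorial n) * Real.sqrt (Mᵀ * M).det := by
        exact mul_le_mul_of_nonneg_left hsqrt (by positivity)
end

section
/- Let L = conv(v_1, ..., v_{t+1}) be a t-dimensional simplex in ℝ^n such that every vertex v_i is at Euclidean distance at least s from the affine hull of the other t vertices. Then L contains a ball of radius s/(t+1) (a ball in the t-dimensional affine hull of L). -/
open Finset

/-- Key estimate: if `x` is an affine combination of the `v j` with weights `w`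
deviating from centroid weights, the deviation at `i` is controlled by
`dist x c / dist (v i, opposite span)`. -/
theorem stmt10_aux {n t : ℕ} {s : ℝ} (hs : 0 < s)
    (v : Fin (t + 1) → EuclideanSpace ℝ (Fin n))
    (hdist : ∀ i, s ≤ Metric.infDist (v i)
      (affineSpan ℝ (v '' {i}ᶜ) : Set (EuclideanSpace ℝ (Fin n))))
    (w : Fin (t + 1) → ℝ) (hw : ∑ j, w j = 0) (i : Fin (t + 1)) :
    |w i| * s ≤ ‖Finset.univ.weightedVSub v w‖ := by
  classical
  by_cases hwi : w i = 0
  · simp [hwi, norm_nonneg]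
  -- build the point q on the opposite face
  set w' : Fin (t + 1) → ℝ := fun j => -w j / w i with hw'
  have hsum_erase : ∑ j ∈ univ.erase i, w j = -w i := by
    have := Finset.add_sum_erase univ w (Finset.mem_univ i)
    linarith [this.trans hw]
  have hsum' : ∑ j ∈ univ.erase i, w' j = 1 := by
    simp only [hw', neg_div]
    rw [Finset.sum_neg_distrib, ← Finset.sum_div, hsum_erase]
    field_simp
  set q := (univ.erase i).affineCombination ℝ v w' with hq
  have hqmem : q ∈ affineSpan ℝ (v '' ({i}ᶜ : Set (Fin (t + 1)))) := by
    obtain ⟨fs, w₂, hw₂, hqe⟩ :=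
      (Finset.eq_affineCombination_subset_iff_eq_affineCombination_subtype ℝ
        (EuclideanSpace ℝ (Fin n)) (p0 := q) (s := ({i}ᶜ : Set (Fin (t + 1)))) (p := v)).mp
        ⟨univ.erase i, by simp, w', hsum', rfl⟩
    rw [hqe]
    have : Set.range (fun j : ({i}ᶜ : Set (Fin (t + 1))) => v j)
        = v '' ({i}ᶜ : Set (Fin (t + 1))) := by
      rw [← Set.image_eq_range]
    rw [← this]
    exact affineCombination_mem_affineSpan hw₂ _
  -- compute v i -ᵥ q
  have hvq : v i -ᵥ q = (w i)⁻¹ • Finset.univ.weightedVSub v w := by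
    rw [hq, Finset.affineCombination_eq_weightedVSubOfPoint_vadd_of_sum_eq_one _ w' v hsum' (v i),
      Finset.weightedVSub_eq_weightedVSubOfPoint_of_sum_eq_zero _ w v hw (v i)]
    rw [vsub_vadd_eq_vsub_sub, vsub_self, zero_sub]
    rw [Finset.weightedVSubOfPoint_apply, Finset.weightedVSubOfPoint_apply]
    rw [← Finset.add_sum_erase univ (fun j => w j • (v j -ᵥ v i)) (Finset.mem_univ i)]
    rw [vsub_self, smul_zero, zero_add, Finset.smul_sum, ← Finset.sum_neg_distrib]
    refine Finset.sum_congr rfl fun j _ => ?_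
    rw [hw', smul_smul, ← neg_smul]
    congr 1
    field_simp
  have hnorm : ‖v i -ᵥ q‖ = |w i|⁻¹ * ‖Finset.univ.weightedVSub v w‖ := by
    rw [hvq, norm_smul, norm_inv, Real.norm_eq_abs]
  have h1 : s ≤ ‖v i -ᵥ q‖ := by
    calc s ≤ Metric.infDist (v i) (affineSpan ℝ (v '' {i}ᶜ) :
        Set (EuclideanSpace ℝ (Fin n))) := hdist i
      _ ≤ dist (v i) q := Metric.infDist_le_dist_of_mem hqmem
      _ = ‖v i -ᵥ q‖ := by rw [dist_eq_norm_vsub]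
  rw [hnorm] at h1
  have habs : 0 < |w i| := abs_pos.mpr hwi
  calc |w i| * s ≤ |w i| * (|w i|⁻¹ * ‖Finset.univ.weightedVSub v w‖) := by
        exact mul_le_mul_of_nonneg_left h1 habs.le
    _ = ‖Finset.univ.weightedVSub v w‖ := by field_simp

/-- a `t`-dimensional simplex in `ℝ^n` each of whose vertices is at distance
at least `s` from the affine hull of the remaining vertices contains a ball (within the
affine hull of the simplex) of radius `s/(t+1)`. -/
theorem stmt10 (n t : ℕ) (s : ℝ)
    (v : Fin (t + 1) → EuclideanSpace ℝ (Fin n))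
    (hind : AffineIndependent ℝ v)
    (hdist : ∀ i, s ≤ Metric.infDist (v i)
      (affineSpan ℝ (v '' {i}ᶜ) : Set (EuclideanSpace ℝ (Fin n)))) :
    ∃ c : EuclideanSpace ℝ (Fin n),
      Metric.closedBall c (s / (t + 1)) ∩
          (affineSpan ℝ (Set.range v) : Set (EuclideanSpace ℝ (Fin n))) ⊆
        convexHull ℝ (Set.range v) := by
  classical
  set wc : Fin (t + 1) → ℝ := Finset.univ.centroidWeights ℝ with hwc
  have hwcsum : ∑ j, wc j = 1 :=
    Finset.sum_centroidWeights_eq_one_of_nonempty ℝ univ univ_nonempty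
  have hwcval : ∀ j, wc j = ((t : ℝ) + 1)⁻¹ := by
    intro j
    simp [hwc, Finset.centroidWeights_apply]
  set c := Finset.univ.affineCombination ℝ v wc with hc
  have hcmem : c ∈ convexHull ℝ (Set.range v) := by
    refine affineCombination_mem_convexHull (fun j _ => ?_) hwcsum
    rw [hwcval j]
    positivity
  refine ⟨c, ?_⟩
  rintro x ⟨hx1, hx2⟩
  have hdxc : dist x c ≤ s / (t + 1) := Metric.mem_closedBall.mp hx1
  rcases le_or_gt s 0 with hs | hs
  · have h0 : dist x c ≤ 0 := hdxc.trans (div_nonpos_of_nonpos_of_nonneg hs (by positivity))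
    have : x = c := by
      have := le_antisymm h0 dist_nonneg
      exact dist_eq_zero.mp this
    rw [this]; exact hcmem
  obtain ⟨w, hw1, rfl⟩ := eq_affineCombination_of_mem_affineSpan_of_fintype hx2
  have hΔsum : ∑ j, (w - wc) j = 0 := by
    simp only [Pi.sub_apply, Finset.sum_sub_distrib, hw1, hwcsum, sub_self]
  have hxc : Finset.univ.affineCombination ℝ v w -ᵥ c = Finset.univ.weightedVSub v (w - wc) := by
    rw [hc, Finset.affineCombination_vsub]
  have hnorm : ‖Finset.univ.weightedVSub v (w - wc)‖ ≤ s / (t + 1) := by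
    rw [← hxc, ← dist_eq_norm_vsub]; exact hdxc
  refine affineCombination_mem_convexHull (fun i _ => ?_) hw1
  have key := stmt10_aux hs v hdist (w - wc) hΔsum i
  have h2 : |(w - wc) i| * s ≤ s / (t + 1) := key.trans hnorm
  have h3 : |(w - wc) i| ≤ ((t : ℝ) + 1)⁻¹ := by
    rw [div_eq_mul_inv] at h2
    nlinarith [abs_nonneg ((w - wc) i)]
  have h4 : -(((t : ℝ) + 1)⁻¹) ≤ (w - wc) i := neg_le_of_abs_le h3
  have h5 : (w - wc) i = w i - ((t : ℝ) + 1)⁻¹ := by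
    simp [Pi.sub_apply, hwcval i]
  linarith [h4, h5 ▸ h4]
end
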